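/- Let G be a finite simple graph with a proper k-coloring φ. Suppose A ⊆ E(G) is an edge set such that for every pair of distinct colors i, j ∈ {1,…,k}, the set A ∩ E(G_{ij}) contains no cycle (i.e., is an acyclic edge set of G_{ij}). Then there exists a 2CC transversal E' ⊆ E(G) \ A with respect to φ satisfying |E'| = m(G, φ). -/

import Mathlib

open SimpleGraph
open scoped Classical

namespace DefectiveAcyclic

variable {V : Type*}

/-- A proper coloring of `G` by natural-number colors. -/
def IsProperColoring (G : SimpleGraph V) (φ : V → ℕ) : Prop :=
  ∀ ⦃u v : V⦄, G.Adj u v → φ u ≠ φ v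

/-- A proper `k`-coloring, where the colors used are from `{1, …, k}`. -/
def IsProperKColoring (k : ℕ) (G : SimpleGraph V) (φ : V → ℕ) : Prop :=
  IsProperColoring G φ ∧ ∀ v : V, φ v ∈ Finset.Icc 1 k

/-- `G`, together with the coloring `φ`, has no cycle whose vertices receive
exactly two colors. -/
def NoTwoColoredCycle [DecidableEq V] (G : SimpleGraph V) (φ : V → ℕ) : Prop :=
  ∀ (v : V) (c : G.Walk v v), c.IsCycle → (c.support.toFinset.image φ).card ≠ 2

/-- A 2CC transversal with respect to `φ`: a set of edges of `G` whose removal destroys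
all 2-colored cycles. -/
def IsTwoCCTransversal [DecidableEq V] (G : SimpleGraph V) (φ : V → ℕ)
    (E' : Set (Sym2 V)) : Prop :=
  E' ⊆ G.edgeSet ∧ NoTwoColoredCycle (G.deleteEdges E') φ

/-- `m(G, φ)`: minimum size of a 2CC transversal with respect to `φ`. -/
noncomputable def mParam [DecidableEq V] (G : SimpleGraph V) (φ : V → ℕ) : ℕ :=
  sInf {m : ℕ | ∃ E' : Finset (Sym2 V), IsTwoCCTransversal G φ ↑E' ∧ E'.card = m}

/-- `H` is a minor of `G`: there are disjoint connected branch sets in `G`, one for each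
vertex of `H`, with edges of `G` between branch sets corresponding to the edges of `H`. -/
def HasMinor {W : Type*} (G : SimpleGraph V) (H : SimpleGraph W) : Prop :=
  ∃ ρ : V → Option W,
    (∀ w : W, ∃ v : V, ρ v = some w) ∧
    (∀ w : W, (G.induce {v : V | ρ v = some w}).Connected) ∧
    (∀ w₁ w₂ : W, H.Adj w₁ w₂ →
      ∃ v₁ v₂ : V, G.Adj v₁ v₂ ∧ ρ v₁ = some w₁ ∧ ρ v₂ = some w₂)

/-- Planarity, via Wagner's theorem: a graph is planar iff it has neither a `K₅` minor
nor a `K₃,₃` minor. -/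
def IsPlanar (G : SimpleGraph V) : Prop :=
  ¬ HasMinor G (⊤ : SimpleGraph (Fin 5)) ∧
  ¬ HasMinor G (completeBipartiteGraph (Fin 3) (Fin 3))

/-- A plane triangulation (on at least 3 vertices) is the same as a maximal planar graph:
planar, and no edge can be added while keeping it planar and simple. -/
def IsPlaneTriangulation [Fintype V] (G : SimpleGraph V) : Prop :=
  3 ≤ Fintype.card V ∧ IsPlanar G ∧
    ∀ u v : V, u ≠ v → ¬ G.Adj u v →
      ¬ IsPlanar (G ⊔ SimpleGraph.fromEdgeSet {s(u, v)})

/-- `T` is a triangle of `G`. -/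
def IsTriangle (G : SimpleGraph V) (T : Finset V) : Prop :=
  T.card = 3 ∧ ∀ u ∈ T, ∀ v ∈ T, u ≠ v → G.Adj u v

/-- `T` is a separating triangle of `G`: deleting its vertices disconnects `G`. -/
def IsSeparatingTriangle (G : SimpleGraph V) (T : Finset V) : Prop :=
  IsTriangle G T ∧ ¬ (G.induce {v : V | v ∉ T}).Preconnected

def NoSeparatingTriangle (G : SimpleGraph V) : Prop :=
  ∀ T : Finset V, ¬ IsSeparatingTriangle G T

/-- A member of `𝒱_G`: a maximal connected (induced) subgraph of `G` without
separating triangles. -/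
def IsPiece [Fintype V] (G : SimpleGraph V) (S : Finset V) : Prop :=
  (G.induce (↑S : Set V)).Connected ∧ NoSeparatingTriangle (G.induce (↑S : Set V)) ∧
    ∀ S' : Finset V, S ⊆ S' → (G.induce (↑S' : Set V)).Connected →
      NoSeparatingTriangle (G.induce (↑S' : Set V)) → S = S'

/-- `𝒱_G` as a finset of vertex sets. -/
noncomputable def pieces [Fintype V] (G : SimpleGraph V) : Finset (Finset V) :=
  Finset.univ.filter (fun S : Finset V => IsPiece G S)

/-- `G` is `k`-connected. -/
def IsKConnected [Fintype V] (k : ℕ) (G : SimpleGraph V) : Prop :=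
  k < Fintype.card V ∧
    ∀ S : Finset V, S.card < k → (G.induce {v : V | v ∉ S}).Connected

/-- In a plane triangulation (equivalently, a maximal planar graph, which has an
essentially unique embedding), the facial cycles are exactly the non-separating
triangles. -/
def IsFacialTriangle (G : SimpleGraph V) (F : Finset V) : Prop :=
  IsTriangle G F ∧ (G.induce {v : V | v ∉ F}).Preconnected

/-- `E'` is a `U`-acyclic edge set: the subgraph formed by the edges of `E'` is a forest
containing no path joining two distinct vertices of `U`. -/
def IsUAcyclic (U : Set V) (E' : Set (Sym2 V)) : Prop :=
  (SimpleGraph.fromEdgeSet E').IsAcyclic ∧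
    ∀ u ∈ U, ∀ v ∈ U, u ≠ v → ¬ (SimpleGraph.fromEdgeSet E').Reachable u v

/-- An acyclic `k`-coloring: proper, with no 2-colored cycle. -/
def IsAcyclicKColoring [DecidableEq V] (k : ℕ) (G : SimpleGraph V) (φ : V → ℕ) : Prop :=
  IsProperKColoring k G φ ∧ NoTwoColoredCycle G φ

/-- `m_k(G)`: the minimum of `m(G, φ)` over all proper `k`-colorings `φ` of `G`
(`∞` if there is none). -/
noncomputable def mkParam [DecidableEq V] (k : ℕ) (G : SimpleGraph V) : ℕ∞ :=
  sInf {x : ℕ∞ | ∃ φ : V → ℕ, IsProperKColoring k G φ ∧ x = (mParam G φ : ℕ∞)}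


lemma reachable_of_sup_edge {X : SimpleGraph V} {u v x y : V}
    (huv : X.Reachable u v) (h : (X ⊔ fromEdgeSet {s(u, v)}).Reachable x y) :
    X.Reachable x y := by
  obtain ⟨p⟩ := h
  induction p with
  | nil => exact Reachable.refl _
  | @cons a b c hab q ih =>
    refine Reachable.trans ?_ ih
    rcases hab with hab | hab
    · exact hab.reachable
    · rw [fromEdgeSet_adj, Set.mem_singleton_iff, Sym2.eq_iff] at hab
      rcases hab.1 with ⟨rfl, rfl⟩ | ⟨rfl, rfl⟩
      · exact huv
      · exact huv.symm

lemma exists_edge_of_mem_support {X : SimpleGraph V} {a b : V} (p : X.Walk a b)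
    (hne : p.edges ≠ []) : ∀ w ∈ p.support, ∃ e ∈ p.edges, w ∈ e := by
  induction p with
  | nil => simp at hne
  | @cons a c b hac q ih =>
    intro w hw
    rw [SimpleGraph.Walk.support_cons, List.mem_cons] at hw
    rcases hw with rfl | hw
    · exact ⟨s(w, c), by simp, by simp⟩
    · rcases Classical.em (q.edges = []) with hq | hq
      · have hlen : q.length = 0 := by
          have := q.length_edges
          rw [hq] at this
          simpa using this.symm
        have hsupp : q.support = [c] := by
          cases q with
          | nil => simp
          | cons h r => simp [SimpleGraph.Walk.length_cons] at hlen
        rw [hsupp, List.mem_singleton] at hw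
        subst hw
        exact ⟨s(a, w), by simp, by simp⟩
      · obtain ⟨e, he, hwe⟩ := ih hq w hw
        exact ⟨e, by simp [he], hwe⟩

lemma image_eq_pair [DecidableEq V] {φ : V → ℕ} {i j : ℕ} (hij : i ≠ j)
    {X : SimpleGraph V} {w : V} (c : X.Walk w w) (hc : c.IsCycle)
    (hcol : ∀ e' ∈ c.edges, ∀ x ∈ e', φ x = i ∨ φ x = j)
    (hprop : ∀ ⦃a b : V⦄, X.Adj a b → φ a ≠ φ b) :
    c.support.toFinset.image φ = {i, j} := by
  have hne : c.edges ≠ [] := by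
    have h3 := hc.three_le_length
    have := c.length_edges
    intro h
    rw [h] at this
    simp at this
    omega
  obtain ⟨e₀, he₀⟩ := List.exists_mem_of_ne_nil _ hne
  obtain ⟨⟨a, b⟩, rfl⟩ := e₀.exists_rep
  have hadj : X.Adj a b := c.adj_of_mem_edges he₀
  have hab : φ a ≠ φ b := hprop hadj
  have hcolab := hcol _ he₀
  have ha : φ a = i ∨ φ a = j := hcolab a (by simp)
  have hb : φ b = i ∨ φ b = j := hcolab b (by simp)
  have hamem : a ∈ c.support := c.fst_mem_support_of_mem_edges he₀
  have hbmem : b ∈ c.support := c.snd_mem_support_of_mem_edges he₀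
  apply Finset.Subset.antisymm
  · intro x hx
    obtain ⟨y, hy, rfl⟩ := Finset.mem_image.mp hx
    rw [List.mem_toFinset] at hy
    obtain ⟨e, he, hye⟩ := exists_edge_of_mem_support c hne y hy
    rcases hcol e he y hye with h | h <;> simp [h]
  · have hi : i ∈ c.support.toFinset.image φ ∧ j ∈ c.support.toFinset.image φ := by
      rcases ha with ha' | ha' <;> rcases hb with hb' | hb'
      · exact absurd (ha'.trans hb'.symm) hab
      · exact ⟨Finset.mem_image.mpr ⟨a, List.mem_toFinset.mpr hamem, ha'⟩,
          Finset.mem_image.mpr ⟨b, List.mem_toFinset.mpr hbmem, hb'⟩⟩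
      · exact ⟨Finset.mem_image.mpr ⟨b, List.mem_toFinset.mpr hbmem, hb'⟩,
          Finset.mem_image.mpr ⟨a, List.mem_toFinset.mpr hamem, ha'⟩⟩
      · exact absurd (ha'.trans hb'.symm) hab
    intro x hx
    rcases Finset.mem_insert.mp hx with rfl | hx'
    · exact hi.1
    · rw [Finset.mem_singleton] at hx'
      subst hx'
      exact hi.2

/-- Lemma: 2CC transversal avoiding an acyclic edge set `A`. -/
theorem statement_0 {V : Type*} [Fintype V] [DecidableEq V] (G : SimpleGraph V)
    (k : ℕ) (φ : V → ℕ) (hφ : IsProperKColoring k G φ)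
    (A : Set (Sym2 V)) (hA : A ⊆ G.edgeSet)
    (hAacyc : ∀ i ∈ Finset.Icc 1 k, ∀ j ∈ Finset.Icc 1 k, i ≠ j →
      (SimpleGraph.fromEdgeSet
        (A ∩ {e : Sym2 V | ∀ v ∈ e, φ v = i ∨ φ v = j})).IsAcyclic) :
    ∃ E' : Finset (Sym2 V), ↑E' ⊆ G.edgeSet \ A ∧
      IsTwoCCTransversal G φ ↑E' ∧ E'.card = mParam G φ := by
  classical
  have hfull : IsTwoCCTransversal G φ ↑G.edgeFinset := by
    constructor
    · rw [coe_edgeFinset]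
    · intro v c hc
      exfalso
      cases c with
      | nil => exact SimpleGraph.Walk.IsCycle.not_of_nil hc
      | cons h q =>
        rw [deleteEdges_adj] at h
        exact h.2 (by rw [coe_edgeFinset]; exact (SimpleGraph.mem_edgeSet _).mpr h.1)
  have hmem : ∃ E' : Finset (Sym2 V), IsTwoCCTransversal G φ ↑E' ∧ E'.card = mParam G φ := by
    have h := Nat.sInf_mem (⟨G.edgeFinset.card, G.edgeFinset, hfull, rfl⟩ :
      Set.Nonempty {m : ℕ | ∃ E' : Finset (Sym2 V), IsTwoCCTransversal G φ ↑E' ∧ E'.card = m})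
    obtain ⟨E', h1, h2⟩ := h
    exact ⟨E', h1, h2⟩
  suffices key : ∀ n : ℕ, ∀ E₀ : Finset (Sym2 V), (E₀.filter (· ∈ A)).card = n →
      IsTwoCCTransversal G φ ↑E₀ → E₀.card = mParam G φ →
      ∃ E' : Finset (Sym2 V), ↑E' ⊆ G.edgeSet \ A ∧
        IsTwoCCTransversal G φ ↑E' ∧ E'.card = mParam G φ by
    obtain ⟨E₀, h1, h2⟩ := hmem
    exact key _ E₀ rfl h1 h2
  intro n
  induction n using Nat.strong_induction_on with
  | _ n ih =>
  intro E₀ hfilt htrans hcard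
  rcases Nat.eq_zero_or_pos n with rfl | hn
  · refine ⟨E₀, ?_, htrans, hcard⟩
    intro s hs
    refine ⟨htrans.1 hs, fun hsA => ?_⟩
    have hmem' : s ∈ E₀.filter (· ∈ A) :=
      Finset.mem_filter.mpr ⟨Finset.mem_coe.mp hs, hsA⟩
    rw [Finset.card_eq_zero.mp hfilt] at hmem'
    simp at hmem'
  · have hnef : (E₀.filter (· ∈ A)).Nonempty := Finset.card_pos.mp (hfilt ▸ hn)
    obtain ⟨e, hef⟩ := hnef
    have he0 : e ∈ E₀ := (Finset.mem_filter.mp hef).1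
    have heA : e ∈ A := (Finset.mem_filter.mp hef).2
    have heE : e ∈ G.edgeSet := htrans.1 (Finset.mem_coe.mpr he0)
    obtain ⟨⟨u, v⟩, rfl⟩ := e.exists_rep
    have huv : G.Adj u v := (SimpleGraph.mem_edgeSet _).mp heE
    have hij : φ u ≠ φ v := hφ.1 huv
    have hu' : φ u ∈ Finset.Icc 1 k := hφ.2 u
    have hv' : φ v ∈ Finset.Icc 1 k := hφ.2 v
    set CS : Set (Sym2 V) := {e : Sym2 V | ∀ w ∈ e, φ w = φ u ∨ φ w = φ v} with hCS
    -- Step A: erasing e is no longer a transversal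
    have herase : ¬ NoTwoColoredCycle (G.deleteEdges ↑(E₀.erase s(u, v))) φ := by
      intro hno
      have ht : IsTwoCCTransversal G φ ↑(E₀.erase s(u, v)) :=
        ⟨fun x hx => htrans.1 (Finset.mem_coe.mpr
          (Finset.mem_of_mem_erase (Finset.mem_coe.mp hx))), hno⟩
      have h1 : mParam G φ ≤ (E₀.erase s(u, v)).card := Nat.sInf_le ⟨_, ht, rfl⟩
      have h2 : (E₀.erase s(u, v)).card < E₀.card := Finset.card_erase_lt_of_mem he0
      omega
    rw [NoTwoColoredCycle] at herase
    push_neg at herase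
    obtain ⟨w₁, C₁, hcyc₁, hcol₁⟩ := herase
    have hedges₁ : ∀ e' ∈ C₁.edges, e' ∈ G.edgeSet ∧ e' ∉ ↑(E₀.erase s(u, v)) := by
      intro e' he'
      have h := C₁.edges_subset_edgeSet he'
      rwa [edgeSet_deleteEdges, Set.mem_diff] at h
    -- Step B: the cycle C₁ passes through e
    have heC₁ : s(u, v) ∈ C₁.edges := by
      by_contra h
      have hsub : ∀ e' ∈ C₁.edges, e' ∈ (G.deleteEdges ↑E₀).edgeSet := by
        intro e' he'
        rw [edgeSet_deleteEdges, Set.mem_diff]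
        obtain ⟨h1, h2⟩ := hedges₁ e' he'
        refine ⟨h1, fun hmem => h2 ?_⟩
        refine Finset.mem_coe.mpr (Finset.mem_erase.mpr ⟨?_, Finset.mem_coe.mp hmem⟩)
        rintro rfl
        exact h he'
      refine htrans.2 w₁ (C₁.transfer _ hsub) (hcyc₁.transfer hsub) ?_
      rw [SimpleGraph.Walk.support_transfer]
      exact hcol₁
    -- Step C: colors of C₁
    have husup : u ∈ C₁.support := C₁.fst_mem_support_of_mem_edges heC₁
    have hvsup : v ∈ C₁.support := C₁.snd_mem_support_of_mem_edges heC₁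
    have himg₁ : C₁.support.toFinset.image φ = {φ u, φ v} := by
      symm
      apply Finset.eq_of_subset_of_card_le
      · intro x hx
        rcases Finset.mem_insert.mp hx with rfl | hx'
        · exact Finset.mem_image.mpr ⟨u, List.mem_toFinset.mpr husup, rfl⟩
        · rw [Finset.mem_singleton] at hx'
          subst hx'
          exact Finset.mem_image.mpr ⟨v, List.mem_toFinset.mpr hvsup, rfl⟩
      · rw [hcol₁, Finset.card_pair hij]
    have hsupcol₁ : ∀ x ∈ C₁.support, φ x = φ u ∨ φ x = φ v := by
      intro x hx
      have h : φ x ∈ C₁.support.toFinset.image φ :=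
        Finset.mem_image.mpr ⟨x, List.mem_toFinset.mpr hx, rfl⟩
      rw [himg₁] at h
      rcases Finset.mem_insert.mp h with h' | h'
      · exact Or.inl h'
      · exact Or.inr (Finset.mem_singleton.mp h')
    have hedgecol₁ : ∀ e' ∈ C₁.edges, e' ∈ CS := by
      intro e' he'
      obtain ⟨⟨a, b⟩, rfl⟩ := e'.exists_rep
      intro x hx
      rcases Sym2.mem_iff.mp hx with rfl | rfl
      · exact hsupcol₁ x (C₁.fst_mem_support_of_mem_edges he')
      · exact hsupcol₁ x (C₁.snd_mem_support_of_mem_edges he')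
    -- Step D: find f ∈ C₁.edges, f ∉ A
    have hfex : ∃ f ∈ C₁.edges, f ∉ A := by
      by_contra hcon
      push_neg at hcon
      have hsub : ∀ e' ∈ C₁.edges, e' ∈ (SimpleGraph.fromEdgeSet (A ∩ CS)).edgeSet := by
        intro e' he'
        rw [edgeSet_fromEdgeSet]
        exact ⟨⟨hcon e' he', hedgecol₁ e' he'⟩,
          G.not_isDiag_of_mem_edgeSet (hedges₁ e' he').1⟩
      exact hAacyc (φ u) hu' (φ v) hv' hij (C₁.transfer _ hsub) (hcyc₁.transfer hsub)
    obtain ⟨f, hfC₁, hfA⟩ := hfex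
    have hfE : f ∈ G.edgeSet := (hedges₁ f hfC₁).1
    have hfner : f ∉ ↑(E₀.erase s(u, v)) := (hedges₁ f hfC₁).2
    have hfne : f ≠ s(u, v) := by
      rintro rfl
      exact hfA heA
    have hfE₀ : f ∉ E₀ := fun h =>
      hfner (Finset.mem_coe.mpr (Finset.mem_erase.mpr ⟨hfne, h⟩))
    have hfCS : f ∈ CS := hedgecol₁ f hfC₁
    -- the swapped edge set E₁
    set E₁ : Finset (Sym2 V) := insert f (E₀.erase s(u, v)) with hE₁
    have hfnotin : f ∉ E₀.erase s(u, v) := fun h => hfE₀ (Finset.mem_of_mem_erase h)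
    have hcard₁ : E₁.card = mParam G φ := by
      rw [hE₁, Finset.card_insert_of_notMem hfnotin, Finset.card_erase_of_mem he0, ← hcard]
      have hpos : 0 < E₀.card := Finset.card_pos.mpr ⟨_, he0⟩
      omega
    have hsub₁ : ↑E₁ ⊆ G.edgeSet := by
      intro x hx
      rcases Finset.mem_insert.mp (Finset.mem_coe.mp hx) with rfl | hx'
      · exact hfE
      · exact htrans.1 (Finset.mem_coe.mpr (Finset.mem_of_mem_erase hx'))
    have hfiltlt : (E₁.filter (· ∈ A)).card < n := by
      rw [hE₁, Finset.filter_insert, if_neg hfA, Finset.filter_erase,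
        Finset.card_erase_of_mem hef, hfilt]
      omega
    -- Step E: the color graph K avoiding E₀ is acyclic
    set T : Set (Sym2 V) := (G.edgeSet ∩ CS) \ ↑E₀ with hT
    set K := SimpleGraph.fromEdgeSet T with hKdef
    have hKedge : K.edgeSet = T \ {e : Sym2 V | e.IsDiag} := by
      rw [hKdef, edgeSet_fromEdgeSet, Sym2.diagSet_eq_setOfPred_isDiag]
    have hKacyc : K.IsAcyclic := by
      intro w c hc
      have hsub : ∀ e' ∈ c.edges, e' ∈ (G.deleteEdges ↑E₀).edgeSet := by
        intro e' he'
        have h := c.edges_subset_edgeSet he'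
        rw [hKedge] at h
        rw [edgeSet_deleteEdges]
        exact ⟨h.1.1.1, h.1.2⟩
      refine htrans.2 w (c.transfer _ hsub) (hc.transfer hsub) ?_
      rw [SimpleGraph.Walk.support_transfer]
      rw [image_eq_pair hij c hc ?_ ?_]
      · exact Finset.card_pair hij
      · intro e' he' x hx
        have h := c.edges_subset_edgeSet he'
        rw [hKedge] at h
        exact h.1.1.2 x hx
      · intro a b hab
        have hG : G.Adj a b := by
          rw [hKdef, fromEdgeSet_adj] at hab
          exact (SimpleGraph.mem_edgeSet _).mp hab.1.1.1
        exact hφ.1 hG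
    -- Step F: E₁ is a transversal
    have htrans₁ : IsTwoCCTransversal G φ ↑E₁ := by
      refine ⟨hsub₁, ?_⟩
      intro w₂ C₂ hcyc₂ hcol₂
      have hedges₂ : ∀ e' ∈ C₂.edges, e' ∈ G.edgeSet ∧ e' ∉ ↑E₁ := by
        intro e' he'
        have h := C₂.edges_subset_edgeSet he'
        rwa [edgeSet_deleteEdges, Set.mem_diff] at h
      by_cases heC₂ : s(u, v) ∈ C₂.edges
      case neg =>
        have hsub : ∀ e' ∈ C₂.edges, e' ∈ (G.deleteEdges ↑E₀).edgeSet := by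
          intro e' he'
          rw [edgeSet_deleteEdges]
          obtain ⟨h1, h2⟩ := hedges₂ e' he'
          refine ⟨h1, fun hmem => ?_⟩
          have hne' : e' ≠ s(u, v) := by
            rintro rfl
            exact heC₂ he'
          exact h2 (Finset.mem_coe.mpr (Finset.mem_insert.mpr (Or.inr
            (Finset.mem_erase.mpr ⟨hne', Finset.mem_coe.mp hmem⟩))))
        refine htrans.2 w₂ (C₂.transfer _ hsub) (hcyc₂.transfer hsub) ?_
        rw [SimpleGraph.Walk.support_transfer]
        exact hcol₂
      case pos =>
        -- colors of C₂
        have husup₂ : u ∈ C₂.support := C₂.fst_mem_support_of_mem_edges heC₂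
        have hvsup₂ : v ∈ C₂.support := C₂.snd_mem_support_of_mem_edges heC₂
        have himg₂ : C₂.support.toFinset.image φ = {φ u, φ v} := by
          symm
          apply Finset.eq_of_subset_of_card_le
          · intro x hx
            rcases Finset.mem_insert.mp hx with rfl | hx'
            · exact Finset.mem_image.mpr ⟨u, List.mem_toFinset.mpr husup₂, rfl⟩
            · rw [Finset.mem_singleton] at hx'
              subst hx'
              exact Finset.mem_image.mpr ⟨v, List.mem_toFinset.mpr hvsup₂, rfl⟩
          · rw [hcol₂, Finset.card_pair hij]
        have hsupcol₂ : ∀ x ∈ C₂.support, φ x = φ u ∨ φ x = φ v := by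
          intro x hx
          have h : φ x ∈ C₂.support.toFinset.image φ :=
            Finset.mem_image.mpr ⟨x, List.mem_toFinset.mpr hx, rfl⟩
          rw [himg₂] at h
          rcases Finset.mem_insert.mp h with h' | h'
          · exact Or.inl h'
          · exact Or.inr (Finset.mem_singleton.mp h')
        have hedgecol₂ : ∀ e' ∈ C₂.edges, e' ∈ CS := by
          intro e' he'
          obtain ⟨⟨a, b⟩, rfl⟩ := e'.exists_rep
          intro x hx
          rcases Sym2.mem_iff.mp hx with rfl | rfl
          · exact hsupcol₂ x (C₂.fst_mem_support_of_mem_edges he')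
          · exact hsupcol₂ x (C₂.snd_mem_support_of_mem_edges he')
        obtain ⟨⟨x, y⟩, hfxy⟩ := f.exists_rep
        subst hfxy
        have hxyG : G.Adj x y := (SimpleGraph.mem_edgeSet _).mp hfE
        have hxy : x ≠ y := hxyG.ne
        have hKxy : K.Adj x y := by
          rw [hKdef, fromEdgeSet_adj]
          exact ⟨⟨⟨hfE, hfCS⟩, fun h => hfE₀ (Finset.mem_coe.mp h)⟩, hxy⟩
        set Z := SimpleGraph.fromEdgeSet (T \ {s(x, y)}) with hZ
        -- (a) Z.Reachable u v from C₂
        have huvZ : Z.Reachable u v := by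
          set Y₂ := SimpleGraph.fromEdgeSet {e' : Sym2 V | e' ∈ C₂.edges} with hY₂
          have hsub : ∀ e' ∈ C₂.edges, e' ∈ Y₂.edgeSet := by
            intro e' he'
            rw [hY₂, edgeSet_fromEdgeSet]
            exact ⟨he', G.not_isDiag_of_mem_edgeSet (hedges₂ e' he').1⟩
          have hreach : (Y₂ \ SimpleGraph.fromEdgeSet {s(u, v)}).Reachable u v :=
            (adj_and_reachable_delete_edges_iff_exists_cycle.mpr
              ⟨w₂, C₂.transfer _ hsub, hcyc₂.transfer hsub,
                by rw [SimpleGraph.Walk.edges_transfer]; exact heC₂⟩).2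
          refine hreach.mono ?_
          intro a b hab
          rw [sdiff_adj, hY₂, fromEdgeSet_adj, fromEdgeSet_adj] at hab
          obtain ⟨⟨haC₂, hane⟩, hnot⟩ := hab
          have habne : s(a, b) ≠ s(u, v) := fun h =>
            hnot ⟨Set.mem_singleton_iff.mpr h, hane⟩
          rw [hZ, fromEdgeSet_adj]
          obtain ⟨h1, h2⟩ := hedges₂ _ haC₂
          have hnE₀ : s(a, b) ∉ (↑E₀ : Set (Sym2 V)) := fun hmem =>
            h2 (Finset.mem_coe.mpr (Finset.mem_insert.mpr (Or.inr
              (Finset.mem_erase.mpr ⟨habne, Finset.mem_coe.mp hmem⟩))))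
          have hnf : s(a, b) ∉ ({s(x, y)} : Set (Sym2 V)) := by
            intro heq
            rw [Set.mem_singleton_iff] at heq
            exact h2 (heq ▸ Finset.mem_coe.mpr (Finset.mem_insert_self _ _))
          exact ⟨⟨⟨⟨h1, hedgecol₂ _ haC₂⟩, hnE₀⟩, hnf⟩, hane⟩
        -- (b) reachability of x, y using C₁, possibly through e
        have hxyZ' : (Z ⊔ SimpleGraph.fromEdgeSet {s(u, v)}).Reachable x y := by
          set Y₁ := SimpleGraph.fromEdgeSet {e' : Sym2 V | e' ∈ C₁.edges} with hY₁
          have hsub : ∀ e' ∈ C₁.edges, e' ∈ Y₁.edgeSet := by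
            intro e' he'
            rw [hY₁, edgeSet_fromEdgeSet]
            exact ⟨he', G.not_isDiag_of_mem_edgeSet (hedges₁ e' he').1⟩
          have hreach : (Y₁ \ SimpleGraph.fromEdgeSet {s(x, y)}).Reachable x y :=
            (adj_and_reachable_delete_edges_iff_exists_cycle.mpr
              ⟨w₁, C₁.transfer _ hsub, hcyc₁.transfer hsub,
                by rw [SimpleGraph.Walk.edges_transfer]; exact hfC₁⟩).2
          refine hreach.mono ?_
          intro a b hab
          rw [sdiff_adj, hY₁, fromEdgeSet_adj, fromEdgeSet_adj] at hab
          obtain ⟨⟨haC₁, hane⟩, hnot⟩ := hab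
          have hnotf : s(a, b) ∉ ({s(x, y)} : Set (Sym2 V)) := fun h =>
            hnot ⟨h, hane⟩
          by_cases hae : s(a, b) = s(u, v)
          · exact (sup_adj _ _ _ _).mpr (Or.inr ((fromEdgeSet_adj _).mpr
              ⟨Set.mem_singleton_iff.mpr hae, hane⟩))
          · refine (sup_adj _ _ _ _).mpr (Or.inl ?_)
            rw [hZ, fromEdgeSet_adj]
            obtain ⟨h1, h2⟩ := hedges₁ _ haC₁
            have hnE₀ : s(a, b) ∉ (↑E₀ : Set (Sym2 V)) := fun hmem =>
              h2 (Finset.mem_coe.mpr (Finset.mem_erase.mpr ⟨hae, Finset.mem_coe.mp hmem⟩))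
            exact ⟨⟨⟨⟨h1, hedgecol₁ _ haC₁⟩, hnE₀⟩, hnotf⟩, hane⟩
        have hxyZ : Z.Reachable x y := reachable_of_sup_edge huvZ hxyZ'
        -- contradiction via path uniqueness in K
        obtain ⟨p⟩ := hxyZ
        have hsubK : ∀ e' ∈ p.edges, e' ∈ K.edgeSet := by
          intro e' he'
          have h := p.edges_subset_edgeSet he'
          rw [hZ, edgeSet_fromEdgeSet] at h
          rw [hKedge]
          exact ⟨h.1.1, h.2⟩
        have hfnotp : s(x, y) ∉ p.edges := by
          intro hmem
          have h := p.edges_subset_edgeSet hmem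
          rw [hZ, edgeSet_fromEdgeSet] at h
          exact h.1.2 rfl
        have hQ := hKacyc.path_unique (SimpleGraph.Path.singleton hKxy)
          (p.transfer K hsubK).toPath
        have hmem2 : s(x, y) ∈ ((p.transfer K hsubK).toPath : K.Walk x y).edges := by
          rw [← hQ]
          simp [SimpleGraph.Path.singleton]
        have hmem3 := SimpleGraph.Walk.edges_toPath_subset _ hmem2
        rw [SimpleGraph.Walk.edges_transfer] at hmem3
        exact hfnotp hmem3
    exact ih _ hfiltlt E₁ rfl htrans₁ hcard₁


end DefectiveAcyclic
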